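/- arXiv:1802.04856 — 2 statements merged into one kernel-verified Lean document; each statement's English description precedes it below -/
import Mathlib

section
/- Let λ = (λ_1,...,λ_r) be a partition of n and let ε^λ be the induced sign character of S_n (the character of the sign representation of the Young subgroup S_λ induced to S_n). Then for every w ∈ S_n, ε^λ(w) = (-1)^{inv(w)} · |R(w,λ)|, where R(w,λ) is the set of labelings of the cycles of w by labels in {1,...,r} such that for each i, the cycles labeled i contain a total of exactly λ_i letters. -/
noncomputable section

attribute [local instance] Classical.propDecidable

/-- The index of the block of the composition `l` containing position `i`
(positions and blocks indexed from `0`). -/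
def blk (l : List ℕ) (i : ℕ) : ℕ :=
  ((List.range l.length).filter fun k => (l.take (k + 1)).sum ≤ i).length

/-- The Young subgroup `S_λ ≤ S_n`: permutations preserving each block of `λ`. -/
def young (n : ℕ) (l : List ℕ) : Finset (Equiv.Perm (Fin n)) :=
  Finset.univ.filter fun g => ∀ i : Fin n, blk l (g i : ℕ) = blk l (i : ℕ)

lemma blk_eq_card (l : List ℕ) (i : ℕ) :
    blk l i = ((Finset.range l.length).filter fun k => (l.take (k + 1)).sum ≤ i).card := rfl

lemma take_sum_mono (l : List ℕ) {a b : ℕ} (h : a ≤ b) :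
    (l.take a).sum ≤ (l.take b).sum := by
  have h1 : l.take a = (l.take b).take a := by rw [List.take_take, Nat.min_eq_left h]
  rw [h1, ← List.sum_take_add_sum_drop (l.take b) a]
  exact Nat.le_add_right _ _

lemma take_sum_le (l : List ℕ) (a : ℕ) : (l.take a).sum ≤ l.sum := by
  rw [← List.sum_take_add_sum_drop l a]; exact Nat.le_add_right _ _

lemma blk_eq {n : ℕ} {l : List ℕ} (hsum : l.sum = n) {i k : ℕ}
    (h1 : (l.take k).sum ≤ i) (h2 : i < (l.take (k + 1)).sum) :
    blk l i = k ∧ k < l.length := by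
  have hk : k < l.length := by
    by_contra hk
    push_neg at hk
    rw [List.take_of_length_le hk] at h1
    have := lt_of_lt_of_le h2 (take_sum_le l (k+1))
    omega
  refine ⟨?_, hk⟩
  rw [blk_eq_card]
  have : ((Finset.range l.length).filter fun k' => (l.take (k' + 1)).sum ≤ i)
      = Finset.range k := by
    ext j
    simp only [Finset.mem_filter, Finset.mem_range]
    constructor
    · rintro ⟨hj, hji⟩
      by_contra hjk
      push_neg at hjk
      exact absurd (le_trans (take_sum_mono l (by omega : k + 1 ≤ j + 1)) hji) (by omega)
    · intro hj
      exact ⟨lt_trans hj hk, le_trans (take_sum_mono l (by omega : j + 1 ≤ k)) h1⟩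
  rw [this, Finset.card_range]

lemma blk_exists {n : ℕ} {l : List ℕ} (hsum : l.sum = n) {i : ℕ} (hi : i < n) :
    ∃ k, (l.take k).sum ≤ i ∧ i < (l.take (k + 1)).sum := by
  set P : ℕ → Prop := fun k => (l.take k).sum ≤ i with hP
  set k := Nat.findGreatest P l.length with hk
  have hk0 : P 0 := by simp [hP]
  have hspec : P k := Nat.findGreatest_spec (Nat.zero_le _) hk0
  have hkle : k ≤ l.length := Nat.findGreatest_le _
  have hklt : k < l.length := by
    rcases lt_or_eq_of_le hkle with h | h
    · exact h
    · exfalso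
      have : P l.length := h ▸ hspec
      rw [hP] at this
      simp only [List.take_length] at this
      omega
  refine ⟨k, hspec, ?_⟩
  by_contra h
  push_neg at h
  exact Nat.findGreatest_is_greatest (Nat.lt_succ_self k) (by omega) h

lemma blk_lt {n : ℕ} {l : List ℕ} (hsum : l.sum = n) {i : ℕ} (hi : i < n) :
    blk l i < l.length := by
  obtain ⟨k, h1, h2⟩ := blk_exists hsum hi
  obtain ⟨he, hk⟩ := blk_eq hsum h1 h2
  omega

lemma blk_fiber {n : ℕ} {l : List ℕ} (hsum : l.sum = n) (k : Fin l.length) :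
    (Finset.univ.filter fun x : Fin n => blk l x.val = k.val).card = l.get k := by
  have key : ∀ a : Fin n, blk l a.val = k.val ↔
      (l.take k.val).sum ≤ a.val ∧ a.val < (l.take (k.val + 1)).sum := by
    intro a
    constructor
    · intro h
      obtain ⟨k0, h1, h2⟩ := blk_exists hsum a.isLt
      obtain ⟨he, _⟩ := blk_eq hsum h1 h2
      have hkk : k0 = k.val := by rw [← he, h]
      subst hkk; exact ⟨h1, h2⟩
    · intro ⟨h1, h2⟩
      exact (blk_eq hsum h1 h2).1
  have hcard : (Finset.univ.filter fun x : Fin n => blk l x.val = k.val).card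
      = (Finset.Ico (l.take k.val).sum (l.take (k.val + 1)).sum).card := by
    refine Finset.card_bij (fun a _ => a.val) ?_ ?_ ?_
    · intro a ha
      simp only [Finset.mem_filter, Finset.mem_univ, true_and] at ha
      rw [Finset.mem_Ico]
      exact (key a).1 ha
    · intro a _ b _ h
      exact Fin.ext h
    · intro b hb
      rw [Finset.mem_Ico] at hb
      have hbn : b < n := by
        have := lt_of_lt_of_le hb.2 (take_sum_le l (k.val + 1))
        omega
      refine ⟨⟨b, hbn⟩, ?_, rfl⟩
      simp only [Finset.mem_filter, Finset.mem_univ, true_and]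
      exact (key ⟨b, hbn⟩).2 ⟨hb.1, hb.2⟩
  rw [hcard, Nat.card_Ico]
  have := List.sum_take_succ l k.val k.isLt
  simp only [List.get_eq_getElem]
  omega

lemma sign_eq_neg_one_pow_inv {n : ℕ} (w : Equiv.Perm (Fin n)) :
    ((Equiv.Perm.sign w : ℤ) : ℚ) =
    (-1) ^ ((Finset.univ.filter
        fun p : Fin n × Fin n => p.1 < p.2 ∧ w p.2 < w p.1).card) := by
  have hSA : ∀ u : Equiv.Perm (Fin n), Equiv.Perm.sign u = Equiv.Perm.signAux u := by
    intro u
    rcases le_or_gt n 1 with h | h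
    · have hss : Subsingleton (Fin n) := by
        rcases Nat.le_one_iff_eq_zero_or_eq_one.1 h with rfl | rfl
        · exact Fin.subsingleton_zero
        · exact Fin.subsingleton_one
      have hu : u = 1 := by
        ext x
        have := hss.elim (u x) x
        simp [this]
      rw [hu, Equiv.Perm.signAux_one, Equiv.Perm.sign_one]
    · have hsurj : Function.Surjective
          (MonoidHom.mk' Equiv.Perm.signAux Equiv.Perm.signAux_mul :
            Equiv.Perm (Fin n) →* ℤˣ) := by
        intro z
        rcases Int.units_eq_one_or z with rfl | rfl
        · exact ⟨1, Equiv.Perm.signAux_one n⟩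
        · have h01 : (⟨0, by omega⟩ : Fin n) ≠ ⟨1, by omega⟩ := by
            intro hc
            simpa using congrArg Fin.val hc
          exact ⟨Equiv.swap _ _, Equiv.Perm.signAux_swap h01⟩
      rw [← Equiv.Perm.eq_sign_of_surjective_hom hsurj]
      rfl
  have h1 : Equiv.Perm.signAux w
      = (-1) ^ (((Equiv.Perm.finPairsLT n).filter fun x => w x.1 ≤ w x.2).card) := by
    unfold Equiv.Perm.signAux
    rw [Finset.prod_ite, Finset.prod_const, Finset.prod_const, one_pow, mul_one]
  have h2 : (((Equiv.Perm.finPairsLT n).filter fun x => w x.1 ≤ w x.2).card)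
      = ((Finset.univ.filter
        fun p : Fin n × Fin n => p.1 < p.2 ∧ w p.2 < w p.1).card) := by
    refine Finset.card_bij (fun x _ => (x.2, x.1)) ?_ ?_ ?_
    · intro x hx
      simp only [Finset.mem_filter, Equiv.Perm.mem_finPairsLT] at hx
      simp only [Finset.mem_filter, Finset.mem_univ, true_and]
      refine ⟨hx.1, lt_of_le_of_ne hx.2 ?_⟩
      intro hc
      exact (ne_of_gt hx.1) (w.injective hc)
    · intro a ha b hb hab
      have h1 := congrArg Prod.fst hab
      have h2 := congrArg Prod.snd hab
      simp only at h1 h2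
      exact Sigma.ext h2 (heq_of_eq h1)
    · intro p hp
      simp only [Finset.mem_filter, Finset.mem_univ, true_and] at hp
      refine ⟨⟨p.2, p.1⟩, ?_, rfl⟩
      simp only [Finset.mem_filter, Equiv.Perm.mem_finPairsLT]
      exact ⟨hp.1, le_of_lt hp.2⟩
  rw [hSA, h1, h2]
  push_cast
  simp

/-- The induced sign character `ε^λ = Ind_{S_λ}^{S_n}(sgn)`, via the induced
character formula, evaluated at `w` equals `(-1)^{inv(w)}` times the number of
labelings of the cycles of `w` by `{1,…,r}` such that the cycles labeled `i`
contain exactly `λ_i` letters in total. -/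
theorem induced_sign_char_eval {n : ℕ} (l : List ℕ)
    (hpos : ∀ x ∈ l, 0 < x) (hsort : l.Pairwise (· ≥ ·)) (hsum : l.sum = n)
    (w : Equiv.Perm (Fin n)) :
    (∑ g : Equiv.Perm (Fin n),
        if g⁻¹ * w * g ∈ young n l
        then ((Equiv.Perm.sign (g⁻¹ * w * g) : ℤ) : ℚ) else 0) /
      ((young n l).card : ℚ)
    = (-1) ^ ((Finset.univ.filter
          fun p : Fin n × Fin n => p.1 < p.2 ∧ w p.2 < w p.1).card) *
      (((Finset.univ.filter fun f : Fin n → Fin l.length =>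
          (∀ x y : Fin n, w.SameCycle x y → f x = f y) ∧
          ∀ i : Fin l.length,
            (Finset.univ.filter fun x => f x = i).card = l.get i).card : ℚ)) := by
  have hblt : ∀ x : Fin n, blk l x.val < l.length := fun x => blk_lt hsum x.isLt
  set bfin : Fin n → Fin l.length := fun x => ⟨blk l x.val, hblt x⟩ with hbfin
  set φ : Equiv.Perm (Fin n) → (Fin n → Fin l.length) := fun g x => bfin (g⁻¹ x) with hφ
  set C := Finset.univ.filter fun f : Fin n → Fin l.length =>
          (∀ x y : Fin n, w.SameCycle x y → f x = f y) ∧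
          ∀ i : Fin l.length,
            (Finset.univ.filter fun x => f x = i).card = l.get i with hCdef
  have hYmem : ∀ g : Equiv.Perm (Fin n),
      g ∈ young n l ↔ ∀ i : Fin n, blk l ((g i : Fin n) : ℕ) = blk l (i : ℕ) := by
    intro g; simp [young]
  have hYinv : ∀ g, g ∈ young n l → g⁻¹ ∈ young n l := by
    intro g hg
    rw [hYmem] at hg ⊢
    intro i
    have h := hg (g⁻¹ i)
    simp only [Equiv.Perm.coe_inv, Equiv.apply_symm_apply] at h
    exact h.symm
  have hY1 : (1 : Equiv.Perm (Fin n)) ∈ young n l := by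
    rw [hYmem]; intro i; rfl
  have hYpos : 0 < (young n l).card := Finset.card_pos.2 ⟨1, hY1⟩
  have hsgn : ∀ g : Equiv.Perm (Fin n),
      Equiv.Perm.sign (g⁻¹ * w * g) = Equiv.Perm.sign w := by
    intro g
    rw [map_mul, map_mul, map_inv]
    have h2 : (Equiv.Perm.sign g)⁻¹ = Equiv.Perm.sign g := Int.units_inv_eq_self _
    rw [h2, mul_comm, ← mul_assoc, Int.units_mul_self, one_mul]
  -- fiber of bfin
  have hbfil : ∀ i : Fin l.length,
      (Finset.univ.filter fun x : Fin n => bfin x = i).card = l.get i := by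
    intro i
    have he : (Finset.univ.filter fun x : Fin n => bfin x = i)
        = (Finset.univ.filter fun x : Fin n => blk l x.val = i.val) := by
      ext x
      simp only [Finset.mem_filter, Finset.mem_univ, true_and, hbfin, Fin.ext_iff]
    rw [he, blk_fiber hsum i]
  -- fibers of φ g
  have hfib : ∀ (g : Equiv.Perm (Fin n)) (i : Fin l.length),
      (Finset.univ.filter fun x => φ g x = i).card = l.get i := by
    intro g i
    rw [← hbfil i]
    refine Finset.card_bij (fun a _ => g⁻¹ a) ?_ ?_ ?_
    · intro a ha
      simp only [Finset.mem_filter, Finset.mem_univ, true_and, hφ] at ha ⊢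
      exact ha
    · intro a _ b _ h
      exact (Equiv.injective g⁻¹) h
    · intro b hb
      simp only [Finset.mem_filter, Finset.mem_univ, true_and, hφ] at hb ⊢
      exact ⟨g b, by simpa using hb, by simp⟩
  -- condition equivalence
  have hcond : ∀ g : Equiv.Perm (Fin n),
      (g⁻¹ * w * g ∈ young n l) ↔ (∀ x y : Fin n, w.SameCycle x y → φ g x = φ g y) := by
    intro g
    rw [hYmem]
    constructor
    · intro h x y hxy
      have hstep : ∀ z : Fin n, bfin (g⁻¹ (w z)) = bfin (g⁻¹ z) := by
        intro z
        have h2 := h (g⁻¹ z)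
        simp only [Equiv.Perm.mul_apply, Equiv.Perm.coe_inv, Equiv.apply_symm_apply] at h2
        exact Fin.ext h2
      have hpow : ∀ (m : ℕ) (z : Fin n), bfin (g⁻¹ ((w ^ m) z)) = bfin (g⁻¹ z) := by
        intro m
        induction m with
        | zero => intro z; simp
        | succ m ih =>
            intro z
            rw [pow_succ']
            simp only [Equiv.Perm.mul_apply]
            rw [hstep ((w ^ m) z), ih z]
      obtain ⟨m, hm⟩ := hxy
      show bfin (g⁻¹ x) = bfin (g⁻¹ y)
      cases m with
      | ofNat m =>
          rw [← hm]
          have : (w ^ (Int.ofNat m)) x = (w ^ m) x := by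
            rw [Int.ofNat_eq_coe, zpow_natCast]
          rw [this]
          exact (hpow m x).symm
      | negSucc m =>
          have hx : x = (w ^ (m + 1)) y := by
            rw [← hm, zpow_negSucc]
            simp
          rw [hx]
          exact hpow (m + 1) y
    · intro h i
      have hsc : w.SameCycle (g i) (w (g i)) := ⟨1, by simp⟩
      have h2 := h (g i) (w (g i)) hsc
      simp only [hφ, Equiv.Perm.coe_inv, Equiv.symm_apply_apply] at h2
      have h3 := congrArg Fin.val h2
      simp only [hbfin] at h3
      simpa [Equiv.Perm.mul_apply] using h3.symm
  -- fiber count over a labeling with correct sizes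
  have hfiberY : ∀ f : Fin n → Fin l.length,
      (∀ i, (Finset.univ.filter fun x => f x = i).card = l.get i) →
      (Finset.univ.filter fun g : Equiv.Perm (Fin n) => φ g = f).card
        = (young n l).card := by
    intro f hf
    have hcards : ∀ i : Fin l.length,
        Fintype.card {x : Fin n // f x = i} = Fintype.card {x : Fin n // bfin x = i} := by
      intro i
      rw [Fintype.card_subtype, Fintype.card_subtype, hf i, hbfil i]
    have ee : ∀ i : Fin l.length, {x : Fin n // f x = i} ≃ {x : Fin n // bfin x = i} :=
      fun i => Fintype.equivOfCardEq (hcards i)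
    set e : Fin n ≃ Fin n := (Equiv.sigmaFiberEquiv f).symm.trans
      ((Equiv.sigmaCongrRight ee).trans (Equiv.sigmaFiberEquiv bfin)) with hedef
    have he : ∀ x, bfin (e x) = f x := by
      intro x
      have : e x = ((ee (f x)) ⟨x, rfl⟩).val := rfl
      rw [this]
      exact ((ee (f x)) ⟨x, rfl⟩).2
    set g0 : Equiv.Perm (Fin n) := e.symm with hg0def
    have hg0inv : g0⁻¹ = e := rfl
    have hg0 : φ g0 = f := by
      funext x
      show bfin (g0⁻¹ x) = f x
      rw [hg0inv]
      exact he x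
    refine Finset.card_bij (fun g _ => g0⁻¹ * g) ?_ ?_ ?_
    · intro g hg
      simp only [Finset.mem_filter, Finset.mem_univ, true_and] at hg
      rw [hYmem]
      intro i
      have h1 : bfin (g0⁻¹ (g i)) = bfin (g⁻¹ (g i)) := by
        have e1 : bfin (g0⁻¹ (g i)) = f (g i) := congrFun hg0 (g i)
        have e2 : bfin (g⁻¹ (g i)) = f (g i) := congrFun hg (g i)
        rw [e1, e2]
      have := congrArg Fin.val h1
      simpa [Equiv.Perm.mul_apply] using this
    · intro a _ b _ h
      exact mul_left_cancel h
    · intro y hy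
      refine ⟨g0 * y, ?_, by group⟩
      simp only [Finset.mem_filter, Finset.mem_univ, true_and]
      funext x
      show bfin ((g0 * y)⁻¹ x) = f x
      have h1 : (g0 * y)⁻¹ x = y⁻¹ (g0⁻¹ x) := rfl
      rw [h1]
      have hyi : y⁻¹ ∈ young n l := hYinv y hy
      rw [hYmem] at hyi
      have h2 : bfin (y⁻¹ (g0⁻¹ x)) = bfin (g0⁻¹ x) := by
        apply Fin.ext
        have := hyi (g0⁻¹ x)
        simp only [hbfin]
        exact (hyi (g0⁻¹ x)).symm ▸ rfl
      rw [h2]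
      exact congrFun hg0 x
  -- main count
  have hcount : (Finset.univ.filter
        fun g : Equiv.Perm (Fin n) => g⁻¹ * w * g ∈ young n l).card
      = (young n l).card * C.card := by
    have hmap : ∀ g ∈ (Finset.univ.filter
        fun g : Equiv.Perm (Fin n) => g⁻¹ * w * g ∈ young n l), φ g ∈ C := by
      intro g hg
      simp only [Finset.mem_filter, Finset.mem_univ, true_and] at hg
      rw [hCdef, Finset.mem_filter]
      exact ⟨Finset.mem_univ _, (hcond g).1 hg, hfib g⟩
    rw [Finset.card_eq_sum_card_fiberwise hmap]
    have hterms : ∀ f ∈ C,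
        (((Finset.univ.filter fun g : Equiv.Perm (Fin n) => g⁻¹ * w * g ∈ young n l)).filter
          fun g => φ g = f).card = (young n l).card := by
      intro f hf
      rw [hCdef, Finset.mem_filter] at hf
      have hset : ((Finset.univ.filter
          fun g : Equiv.Perm (Fin n) => g⁻¹ * w * g ∈ young n l)).filter (fun g => φ g = f)
          = Finset.univ.filter fun g : Equiv.Perm (Fin n) => φ g = f := by
        ext g
        simp only [Finset.mem_filter, Finset.mem_univ, true_and]
        constructor
        · exact fun h => h.2
        · intro h
          refine ⟨(hcond g).2 ?_, h⟩
          intro x y hxy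
          rw [h]
          exact hf.2.1 x y hxy
      rw [hset]
      exact hfiberY f hf.2.2
    rw [Finset.sum_congr rfl hterms, Finset.sum_const, smul_eq_mul, mul_comm]
  -- sum simplification
  have hsum1 : (∑ g : Equiv.Perm (Fin n),
        if g⁻¹ * w * g ∈ young n l
        then ((Equiv.Perm.sign (g⁻¹ * w * g) : ℤ) : ℚ) else 0)
      = ((Finset.univ.filter
          fun g : Equiv.Perm (Fin n) => g⁻¹ * w * g ∈ young n l).card : ℚ)
        * ((Equiv.Perm.sign w : ℤ) : ℚ) := by
    rw [← Finset.sum_filter]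
    have : ∀ g ∈ (Finset.univ.filter
        fun g : Equiv.Perm (Fin n) => g⁻¹ * w * g ∈ young n l),
        ((Equiv.Perm.sign (g⁻¹ * w * g) : ℤ) : ℚ) = ((Equiv.Perm.sign w : ℤ) : ℚ) := by
      intro g _
      rw [hsgn g]
    rw [Finset.sum_congr rfl this, Finset.sum_const, nsmul_eq_mul]
  rw [hsum1, hcount, ← sign_eq_neg_one_pow_inv w]
  have hY0 : ((young n l).card : ℚ) ≠ 0 := ne_of_gt (by exact_mod_cast hYpos)
  push_cast
  field_simp
end
end

section
/- Let G be the wiring diagram of an expression s_{i_1} ⋯ s_{i_m} in S_n (the concatenation of the m elementary diagrams G_{[i_j, i_j+1]}). Then the number of bijective path families covering G (each edge used exactly once) is exactly 2^m, and if s_{i_1} ⋯ s_{i_m} is a reduced expression for v, then there is a unique covering path family of type v, namely the one in which all m indices are crossings. -/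
noncomputable section

attribute [local instance] Classical.propDecidable

/-- The adjacent transposition `s_{i+1}` swapping `i` and `i+1` in `S_{n+1}`. -/
def adjT {n : ℕ} (i : Fin n) : Equiv.Perm (Fin (n + 1)) :=
  Equiv.swap i.castSucc i.succ

/-- Coxeter length: minimal number of adjacent transpositions whose product is `w`. -/
def len {m : ℕ} (w : Equiv.Perm (Fin m)) : ℕ :=
  sInf {k | ∃ l : List (Equiv.Perm (Fin m)), l.length = k ∧
    (∀ s ∈ l, ∃ p : Fin m × Fin m, (p.1 : ℕ) + 1 = (p.2 : ℕ) ∧ s = Equiv.swap p.1 p.2) ∧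
    l.prod = w}

/-- Product of the word of generators given by a list of indices. -/
def wordProd {n : ℕ} (l : List (Fin n)) : Equiv.Perm (Fin (n + 1)) :=
  (l.map adjT).prod

/-- `l` is a reduced word for `w`. -/
def IsRedWord {n : ℕ} (l : List (Fin n)) (w : Equiv.Perm (Fin (n + 1))) : Prop :=
  wordProd l = w ∧ l.length = len w

/-- Bruhat order. -/
def BruhatLE {n : ℕ} (u v : Equiv.Perm (Fin (n + 1))) : Prop :=
  ∀ l : List (Fin n), IsRedWord l v → ∃ l' : List (Fin n), l'.Sublist l ∧ IsRedWord l' u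

/-- Left weak order. -/
def WeakLE {n : ℕ} (t u : Equiv.Perm (Fin (n + 1))) : Prop :=
  len u = len (u * t⁻¹) + len t

/-- The base ring `ℤ[q^{1/2}, q^{-1/2}]`, with `T 1 = q^{1/2}`. -/
abbrev A := LaurentPolynomial ℤ

def qh : A := LaurentPolynomial.T 1
def qhi : A := LaurentPolynomial.T (-1)
def qq : A := LaurentPolynomial.T 2

/-- A (bijective) path family covering the wiring diagram of the word `l`,
encoded by the sequence of level assignments `P t : source → level`:
`P 0 = 1`, and at the `j`-th central vertex the two incident wires either cross
or do not cross. Its type is `(P last)⁻¹`, sending each source to its sink. -/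
def PathFam {n : ℕ} (l : List (Fin n))
    (P : Fin (l.length + 1) → Equiv.Perm (Fin (n + 1))) : Prop :=
  P 0 = 1 ∧ ∀ j : Fin l.length,
    P j.succ = adjT (l.get j) * P j.castSucc ∨ P j.succ = P j.castSucc

/-- The type of a covering path family: source `i` is joined to sink `(P last)⁻¹ i`. -/
def famType {n : ℕ} (l : List (Fin n))
    (P : Fin (l.length + 1) → Equiv.Perm (Fin (n + 1))) : Equiv.Perm (Fin (n + 1)) :=
  (P (Fin.last l.length))⁻¹

namespace PFaux

variable {n : ℕ}

lemma adjT_inv (i : Fin n) : (adjT i)⁻¹ = adjT i := by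
  simp [adjT]

lemma adjT_mul_ne (i : Fin n) (P : Equiv.Perm (Fin (n + 1))) : adjT i * P ≠ P := by
  intro h
  have h1 : adjT i = 1 := by
    have : adjT i * P = 1 * P := by simpa using h
    exact mul_right_cancel this
  have h2 := congrArg (fun e => e i.castSucc) h1
  simp [adjT, Equiv.swap_apply_left] at h2
  exact absurd h2 (show i.castSucc < i.succ from Fin.castSucc_lt_succ).ne'

def stepP (l : List (Fin n)) (c : Fin l.length → Bool) : ℕ → Equiv.Perm (Fin (n + 1))
  | 0 => 1
  | (k + 1) =>
    if h : k < l.length then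
      (if c ⟨k, h⟩ then adjT (l.get ⟨k, h⟩) * stepP l c k else stepP l c k)
    else stepP l c k

lemma stepP_succ (l : List (Fin n)) (c : Fin l.length → Bool) (k : ℕ) (h : k < l.length) :
    stepP l c (k + 1) =
      if c ⟨k, h⟩ then adjT (l.get ⟨k, h⟩) * stepP l c k else stepP l c k := by
  rw [stepP, dif_pos h]

def toP (l : List (Fin n)) (c : Fin l.length → Bool) :
    Fin (l.length + 1) → Equiv.Perm (Fin (n + 1)) :=
  fun i => stepP l c i

def fromP (l : List (Fin n)) (P : Fin (l.length + 1) → Equiv.Perm (Fin (n + 1))) :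
    Fin l.length → Bool :=
  fun j => decide (P j.succ = adjT (l.get j) * P j.castSucc)

lemma toP_succ (l : List (Fin n)) (c : Fin l.length → Bool) (j : Fin l.length) :
    toP l c j.succ =
      if c j then adjT (l.get j) * toP l c j.castSucc else toP l c j.castSucc := by
  have h := stepP_succ l c j.val j.isLt
  have e1 : toP l c j.succ = stepP l c (j.val + 1) := rfl
  have e2 : toP l c j.castSucc = stepP l c j.val := rfl
  rw [e1, e2, h]

lemma toP_pathFam (l : List (Fin n)) (c : Fin l.length → Bool) : PathFam l (toP l c) := by
  refine ⟨rfl, fun j => ?_⟩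
  have h := toP_succ l c j
  by_cases hc : c j
  · rw [if_pos hc] at h; exact Or.inl h
  · rw [if_neg hc] at h; exact Or.inr h

lemma fromP_spec (l : List (Fin n)) (P : Fin (l.length + 1) → Equiv.Perm (Fin (n + 1)))
    (hP : PathFam l P) :
    ∀ k (hk : k ≤ l.length), stepP l (fromP l P) k = P ⟨k, Nat.lt_succ_of_le hk⟩ := by
  intro k
  induction k with
  | zero =>
    intro _
    have : (⟨0, Nat.lt_succ_of_le (Nat.zero_le _)⟩ : Fin (l.length + 1)) = 0 := rfl
    rw [this, hP.1]; rfl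
  | succ k ih =>
    intro hk
    have h : k < l.length := hk
    set j : Fin l.length := ⟨k, h⟩ with hj
    have hsucc : (j.succ : Fin (l.length + 1)) = ⟨k + 1, Nat.lt_succ_of_le hk⟩ := rfl
    have hcast : (j.castSucc : Fin (l.length + 1)) = ⟨k, Nat.lt_succ_of_le h.le⟩ := rfl
    have hrec := hP.2 j
    rw [stepP_succ l (fromP l P) k h, ← hj]
    by_cases hcc : P j.succ = adjT (l.get j) * P j.castSucc
    · have hc : fromP l P j = true := decide_eq_true hcc
      rw [if_pos hc, ih h.le, ← hcast, ← hcc, hsucc]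
    · have hc : fromP l P j = false := decide_eq_false hcc
      rw [if_neg (by simp [hc]), ih h.le, ← hcast]
      rcases hrec with h1 | h1
      · exact absurd h1 hcc
      · rw [← h1, hsucc]

lemma toP_fromP (l : List (Fin n)) (P : Fin (l.length + 1) → Equiv.Perm (Fin (n + 1)))
    (hP : PathFam l P) : toP l (fromP l P) = P := by
  funext i
  have hk : (i : ℕ) ≤ l.length := Nat.lt_succ_iff.mp i.isLt
  have := fromP_spec l P hP i hk
  have e : toP l (fromP l P) i = stepP l (fromP l P) i := rfl
  rw [e, this]

lemma fromP_toP (l : List (Fin n)) (c : Fin l.length → Bool) : fromP l (toP l c) = c := by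
  funext j
  have h := toP_succ l c j
  by_cases hc : c j
  · rw [if_pos hc] at h
    simp [fromP, h, hc]
  · rw [if_neg hc] at h
    have hne : toP l c j.succ ≠ adjT (l.get j) * toP l c j.castSucc := by
      rw [h]; exact fun hh => adjT_mul_ne _ _ hh.symm
    simp only [List.get_eq_getElem] at hne
    simp [fromP, hne, hc]

lemma wordProd_append (a b : List (Fin n)) :
    wordProd (a ++ b) = wordProd a * wordProd b := by
  simp [wordProd]

lemma len_le_of_wordProd (l' : List (Fin n)) : len (wordProd l') ≤ l'.length := by
  apply Nat.sInf_le
  refine ⟨l'.map adjT, by simp, ?_, rfl⟩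
  intro s hs
  simp only [List.mem_map] at hs
  obtain ⟨i, _, rfl⟩ := hs
  exact ⟨(i.castSucc, i.succ), by simp, rfl⟩

lemma stepP_wordProd (l : List (Fin n)) (c : Fin l.length → Bool) :
    ∀ k, k ≤ l.length → ∃ l' : List (Fin n),
      stepP l c k = (wordProd l')⁻¹ ∧ l'.length ≤ k ∧
      (l'.length = k → ∀ j (hj : j < l.length), j < k → c ⟨j, hj⟩ = true) := by
  intro k
  induction k with
  | zero =>
    intro _
    exact ⟨[], by simp [stepP, wordProd], le_refl _, fun _ j _ hj => absurd hj (Nat.not_lt_zero j)⟩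
  | succ k ih =>
    intro hk
    have h : k < l.length := hk
    obtain ⟨l', h1, h2, h3⟩ := ih h.le
    by_cases hc : c ⟨k, h⟩ = true
    · refine ⟨l' ++ [l.get ⟨k, h⟩], ?_, by simp; omega, ?_⟩
      · rw [stepP_succ l c k h, if_pos hc, h1, wordProd_append]
        simp [wordProd, mul_inv_rev, adjT_inv]
      · intro hlen j hj hjk
        have hl : l'.length = k := by simp at hlen; omega
        rcases Nat.lt_succ_iff_lt_or_eq.mp hjk with h' | h'
        · exact h3 hl j hj h'
        · subst h'; exact hc
    · refine ⟨l', ?_, h2.trans (Nat.le_succ k), fun hlen => by omega⟩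
      rw [stepP_succ l c k h, if_neg (by simp [hc]), h1]

lemma stepP_true (l : List (Fin n)) :
    ∀ k, k ≤ l.length → stepP l (fun _ => true) k = (wordProd (l.take k))⁻¹ := by
  intro k
  induction k with
  | zero => intro _; simp [stepP, wordProd]
  | succ k ih =>
    intro hk
    have h : k < l.length := hk
    rw [stepP_succ l _ k h, if_pos rfl, ih h.le]
    have ht : l.take (k + 1) = l.take k ++ [l.get ⟨k, h⟩] := by
      rw [List.take_succ]
      congr 1
      simp [List.getElem?_eq_getElem h]
    rw [ht, wordProd_append]
    simp [wordProd, mul_inv_rev, adjT_inv]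

end PFaux

open PFaux in
/-- The wiring diagram of `s_{i₁}⋯s_{i_m}` is covered by exactly `2^m` path
families; and if the word is reduced with product `v`, there is a unique covering
family of type `v`, namely the all-crossings one. -/
theorem pathFam_count_and_unique {n : ℕ} (l : List (Fin n))
    (v : Equiv.Perm (Fin (n + 1))) :
    (Finset.univ.filter fun P : Fin (l.length + 1) → Equiv.Perm (Fin (n + 1)) =>
        PathFam l P).card = 2 ^ l.length ∧
    (IsRedWord l v →
      (∃! P : Fin (l.length + 1) → Equiv.Perm (Fin (n + 1)),
        PathFam l P ∧ famType l P = v) ∧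
      ∀ P : Fin (l.length + 1) → Equiv.Perm (Fin (n + 1)),
        PathFam l P → famType l P = v →
          ∀ j : Fin l.length, P j.succ = adjT (l.get j) * P j.castSucc) := by
  constructor
  · -- counting: bijection with Fin l.length → Bool
    have hb : (Finset.univ.filter fun P : Fin (l.length + 1) → Equiv.Perm (Fin (n + 1)) =>
        PathFam l P).card = (Finset.univ : Finset (Fin l.length → Bool)).card := by
      refine Finset.card_bij' (fun P _ => fromP l P) (fun c _ => toP l c) ?_ ?_ ?_ ?_
      · intro P _; exact Finset.mem_univ _
      · intro c _
        simp only [Finset.mem_filter, Finset.mem_univ, true_and]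
        exact toP_pathFam l c
      · intro P hP
        simp only [Finset.mem_filter, Finset.mem_univ, true_and] at hP
        exact toP_fromP l P hP
      · intro c _; exact fromP_toP l c
    rw [hb]
    simp
  · intro hred
    have hlen : len v = l.length := hred.2.symm
    -- every covering family of type v is all-crossings
    have hcross : ∀ P : Fin (l.length + 1) → Equiv.Perm (Fin (n + 1)),
        PathFam l P → famType l P = v →
        ∀ j : Fin l.length, P j.succ = adjT (l.get j) * P j.castSucc := by
      intro P hP ht j
      obtain ⟨l', h1, h2, h3⟩ := stepP_wordProd l (fromP l P) l.length (le_refl _)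
      have hPl : stepP l (fromP l P) l.length = P (Fin.last l.length) := by
        have := fromP_spec l P hP l.length (le_refl _)
        rw [this]; rfl
      have hv : wordProd l' = v := by
        have : (P (Fin.last l.length))⁻¹ = v := ht
        rw [← hPl, h1, inv_inv] at this
        exact this
      have hle : l.length ≤ l'.length := by
        have := len_le_of_wordProd l'
        rw [hv, hlen] at this
        exact this
      have hall := h3 (le_antisymm h2 hle) j.val j.isLt j.isLt
      have : fromP l P j = true := by
        have hje : (⟨j.val, j.isLt⟩ : Fin l.length) = j := rfl
        rw [hje] at hall; exact hall
      exact of_decide_eq_true this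
    refine ⟨⟨toP l (fun _ => true), ⟨toP_pathFam l _, ?_⟩, ?_⟩, hcross⟩
    · -- type of the all-crossings family is v
      show (toP l (fun _ => true) (Fin.last l.length))⁻¹ = v
      have : toP l (fun _ => true) (Fin.last l.length) =
          stepP l (fun _ => true) l.length := rfl
      rw [this, stepP_true l l.length (le_refl _), inv_inv, List.take_length, hred.1]
    · -- uniqueness
      rintro P ⟨hP, ht⟩
      have hall := hcross P hP ht
      have hfp : fromP l P = fun _ => true := by
        funext j
        exact decide_eq_true (hall j)
      rw [← toP_fromP l P hP, hfp]
end
end
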